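/- Suppose X follows a spherically symmetric distribution on ℝᵖ and Γ is a p×p orthogonal matrix whose first row is β₀ᵀ/‖β₀‖. Then for any integrable function h : ℝ → ℝ and any u, E[h(β₀ᵀX) X 1{β₀ᵀX/‖β₀‖ ≤ u}] = (β₀/‖β₀‖²) E[h(β₀ᵀX) β₀ᵀX 1{β₀ᵀX/‖β₀‖ ≤ u}]. -/

import Mathlib

open MeasureTheory
open scoped RealInnerProductSpace

/-- if `X` is spherically symmetric on `ℝᵖ`, then for any integrable `h` and
any `u`, `E[h(β₀ᵀX) X 1{β₀ᵀX/‖β₀‖ ≤ u}] = (β₀/‖β₀‖²) E[h(β₀ᵀX) β₀ᵀX 1{β₀ᵀX/‖β₀‖ ≤ u}]`. -/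
theorem stmt11 {Ω : Type*} [MeasurableSpace Ω] (μ : Measure Ω) [IsProbabilityMeasure μ]
    (p : ℕ) (X : Ω → EuclideanSpace ℝ (Fin p)) (hX : Measurable X)
    (hsph : ∀ R : EuclideanSpace ℝ (Fin p) ≃ₗᵢ[ℝ] EuclideanSpace ℝ (Fin p),
      Measure.map (fun ω => R (X ω)) μ = Measure.map X μ)
    (β₀ : EuclideanSpace ℝ (Fin p)) (hβ : β₀ ≠ 0)
    (h : ℝ → ℝ) (hh : Measurable h) (u : ℝ)
    (hint1 : Integrable (fun ω =>
      (h ⟪β₀, X ω⟫ * (if ⟪β₀, X ω⟫ / ‖β₀‖ ≤ u then (1:ℝ) else 0)) • X ω) μ)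
    (hint2 : Integrable (fun ω =>
      h ⟪β₀, X ω⟫ * ⟪β₀, X ω⟫ * (if ⟪β₀, X ω⟫ / ‖β₀‖ ≤ u then (1:ℝ) else 0)) μ) :
    ∫ ω, (h ⟪β₀, X ω⟫ * (if ⟪β₀, X ω⟫ / ‖β₀‖ ≤ u then (1:ℝ) else 0)) • X ω ∂μ
      = ((∫ ω, h ⟪β₀, X ω⟫ * ⟪β₀, X ω⟫ *
            (if ⟪β₀, X ω⟫ / ‖β₀‖ ≤ u then (1:ℝ) else 0) ∂μ) / ‖β₀‖ ^ 2) • β₀ := by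
  set g : ℝ → ℝ := fun t => h t * (if t / ‖β₀‖ ≤ u then (1:ℝ) else 0) with hg
  have hgmeas : Measurable g := by
    apply hh.mul
    exact Measurable.ite (measurableSet_le (measurable_id.div_const _) measurable_const)
      measurable_const measurable_const
  -- zero lemma for orthogonal vectors
  have hzero : ∀ v : EuclideanSpace ℝ (Fin p), ⟪β₀, v⟫ = 0 →
      ∫ ω, g ⟪β₀, X ω⟫ * ⟪v, X ω⟫ ∂μ = 0 := by
    intro v hv
    set R : EuclideanSpace ℝ (Fin p) ≃ₗᵢ[ℝ] EuclideanSpace ℝ (Fin p) := Submodule.reflection (ℝ ∙ β₀)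
    have hRβ : R β₀ = β₀ := Submodule.reflection_mem_subspace_eq_self (Submodule.mem_span_singleton_self β₀)
    have hRv : R v = -v :=
      Submodule.reflection_mem_subspace_orthogonalComplement_eq_neg
        (Submodule.mem_orthogonal_singleton_iff_inner_right.mpr hv)
    set F : EuclideanSpace ℝ (Fin p) → ℝ := fun x => g ⟪β₀, x⟫ * ⟪v, x⟫ with hF
    have hFmeas : Measurable F := by
      apply (hgmeas.comp ((continuous_const.inner continuous_id).measurable)).mul
      exact (continuous_const.inner continuous_id).measurable
    have hFR : ∀ x, F (R x) = -F x := by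
      intro x
      have h1 : ⟪β₀, R x⟫ = ⟪β₀, x⟫ := by
        calc ⟪β₀, R x⟫ = ⟪R β₀, R x⟫ := by rw [hRβ]
        _ = ⟪β₀, x⟫ := R.inner_map_map β₀ x
      have h2 : ⟪v, R x⟫ = -⟪v, x⟫ := by
        have : ⟪R v, R x⟫ = ⟪v, x⟫ := R.inner_map_map v x
        rw [hRv, inner_neg_left] at this
        linarith
      simp only [hF]
      rw [h1, h2]; ring
    have hmap := hsph R
    have A : ∫ y, F y ∂(Measure.map X μ) = ∫ ω, F (X ω) ∂μ :=
      integral_map hX.aemeasurable hFmeas.aestronglyMeasurable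
    have B : ∫ y, F y ∂(Measure.map (fun ω => R (X ω)) μ) = ∫ ω, F (R (X ω)) ∂μ :=
      integral_map ((R.continuous.measurable.comp hX).aemeasurable)
        hFmeas.aestronglyMeasurable
    have key : ∫ ω, F (X ω) ∂μ = ∫ ω, F (R (X ω)) ∂μ := by
      rw [← A, ← B, hmap]
    have key2 : ∫ ω, F (R (X ω)) ∂μ = -∫ ω, F (X ω) ∂μ := by
      simp_rw [hFR]
      exact integral_neg _
    have h0 : ∫ ω, F (X ω) ∂μ = 0 := by linarith
    exact h0
  -- main argument
  set I : ℝ := ∫ ω, h ⟪β₀, X ω⟫ * ⟪β₀, X ω⟫ *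
      (if ⟪β₀, X ω⟫ / ‖β₀‖ ≤ u then (1:ℝ) else 0) ∂μ with hI
  refine ext_inner_left ℝ fun v => ?_
  have hIv : ∫ ω, g ⟪β₀, X ω⟫ * ⟪β₀, X ω⟫ ∂μ = I := by
    rw [hI]
    congr 1
    funext ω
    simp only [hg]
    ring
  set a : ℝ := ⟪β₀, v⟫ / ‖β₀‖ ^ 2 with ha
  set v' : EuclideanSpace ℝ (Fin p) := v - a • β₀ with hv'
  have hβnorm : ‖β₀‖ ≠ 0 := norm_ne_zero_iff.mpr hβ
  have hov' : ⟪β₀, v'⟫ = 0 := by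
    rw [hv']
    rw [inner_sub_right, real_inner_smul_right, real_inner_self_eq_norm_sq]
    rw [ha, div_mul_cancel₀ _ (pow_ne_zero 2 hβnorm), sub_self]
  have hint1' : Integrable (fun ω => (g ⟪β₀, X ω⟫) • X ω) μ := hint1
  have hLHS : ⟪v, ∫ ω, (g ⟪β₀, X ω⟫) • X ω ∂μ⟫ = a * I := by
    rw [← integral_inner hint1' v]
    have hrw : ∀ ω, ⟪v, (g ⟪β₀, X ω⟫) • X ω⟫
        = g ⟪β₀, X ω⟫ * ⟪v', X ω⟫ + a * (g ⟪β₀, X ω⟫ * ⟪β₀, X ω⟫) := by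
      intro ω
      rw [real_inner_smul_right]
      have : ⟪v, X ω⟫ = ⟪v', X ω⟫ + a * ⟪β₀, X ω⟫ := by
        rw [hv', inner_sub_left, real_inner_smul_left]; ring
      rw [this]; ring
    simp_rw [hrw]
    have hi1 : Integrable (fun ω => g ⟪β₀, X ω⟫ * ⟪v', X ω⟫) μ := by
      have := (innerSL ℝ v').integrable_comp hint1'
      simpa [real_inner_smul_right] using this
    have hi2 : Integrable (fun ω => a * (g ⟪β₀, X ω⟫ * ⟪β₀, X ω⟫)) μ := by
      apply Integrable.const_mul
      apply hint2.congr
      filter_upwards with ω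
      simp only [hg]; ring
    rw [integral_add hi1 hi2, hzero v' hov', integral_const_mul, hIv, zero_add]
  calc ⟪v, ∫ ω, (g ⟪β₀, X ω⟫) • X ω ∂μ⟫ = a * I := hLHS
    _ = ⟪v, (I / ‖β₀‖ ^ 2) • β₀⟫ := by
        rw [real_inner_smul_right, ha, real_inner_comm]; ring
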